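/- For the covariant Pauli channel with parameters p0, p1, p3 ≥ 0, p0 + 2p1 + p3 = 1, the partial transpose (I⊗T)𝒥_Λ of its Choi matrix is positive semidefinite if and only if p0 ≤ 1/2 and p3 ≤ 1/2. -/

import Mathlib

open Matrix
open scoped ComplexOrder

noncomputable section

/-- The partial transpose of the Choi matrix of the covariant Pauli channel. -/
def choiPT (p0 p1 p3 : ℝ) : Matrix (Fin 4) (Fin 4) ℂ :=
  !![((p0 + p3 : ℝ) : ℂ), 0, 0, 0;
     0, ((2 * p1 : ℝ) : ℂ), ((p0 - p3 : ℝ) : ℂ), 0;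
     0, ((p0 - p3 : ℝ) : ℂ), ((2 * p1 : ℝ) : ℂ), 0;
     0, 0, 0, ((p0 + p3 : ℝ) : ℂ)]

/-- The partial transpose of the Choi matrix of the covariant Pauli channel is positive
semidefinite if and only if `p₀ ≤ 1/2` and `p₃ ≤ 1/2`. -/
theorem choiPT_posSemidef_iff (p0 p1 p3 : ℝ) (h0 : 0 ≤ p0) (h1 : 0 ≤ p1) (h3 : 0 ≤ p3)
    (hsum : p0 + 2 * p1 + p3 = 1) :
    (choiPT p0 p1 p3).PosSemidef ↔ p0 ≤ 1 / 2 ∧ p3 ≤ 1 / 2 := by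
  constructor
  · intro h
    have ha := h.dotProduct_mulVec_nonneg ![0,1,-1,0]
    have hb := h.dotProduct_mulVec_nonneg ![0,1,1,0]
    have ea : star ![0,1,-1,0] ⬝ᵥ (choiPT p0 p1 p3) *ᵥ ![0,1,-1,0]
        = ((2 * (2 * p1 - (p0 - p3)) : ℝ) : ℂ) := by
      simp [choiPT, dotProduct, Matrix.mulVec, Fin.sum_univ_four,
        Matrix.vecHead, Matrix.vecTail]
      ring
    have eb : star ![0,1,1,0] ⬝ᵥ (choiPT p0 p1 p3) *ᵥ ![0,1,1,0]
        = ((2 * (2 * p1 + (p0 - p3)) : ℝ) : ℂ) := by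
      simp [choiPT, dotProduct, Matrix.mulVec, Fin.sum_univ_four,
        Matrix.vecHead, Matrix.vecTail]
      ring
    rw [ea, Complex.zero_le_real] at ha
    rw [eb, Complex.zero_le_real] at hb
    constructor <;> linarith
  · rintro ⟨hp0, hp3⟩
    refine Matrix.posSemidef_iff_dotProduct_mulVec.mpr ⟨?_, ?_⟩
    · ext i j
      fin_cases i <;> fin_cases j <;>
        simp [choiPT, Matrix.conjTranspose_apply, Matrix.vecHead, Matrix.vecTail]
    · intro x
      have key : star x ⬝ᵥ (choiPT p0 p1 p3) *ᵥ x
          = (((p0 + p3) * (Complex.normSq (x 0) + Complex.normSq (x 3))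
            + 2 * p1 * (Complex.normSq (x 1) + Complex.normSq (x 2))
            + 2 * (p0 - p3) * ((x 1).re * (x 2).re + (x 1).im * (x 2).im) : ℝ) : ℂ) := by
        simp [choiPT, dotProduct, Matrix.mulVec, Fin.sum_univ_four,
          Matrix.vecHead, Matrix.vecTail, Complex.ext_iff, Complex.normSq_apply,
          Complex.add_re, Complex.add_im, Complex.mul_re, Complex.mul_im]
        constructor <;> ring
      rw [key, Complex.zero_le_real]
      simp only [Complex.normSq_apply]
      have c0 : (0:ℝ) ≤ 1 - 2 * p0 := by linarith
      have c3 : (0:ℝ) ≤ 1 - 2 * p3 := by linarith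
      nlinarith [mul_nonneg c0 (sq_nonneg ((x 1).re - (x 2).re)),
        mul_nonneg c0 (sq_nonneg ((x 1).im - (x 2).im)),
        mul_nonneg c3 (sq_nonneg ((x 1).re + (x 2).re)),
        mul_nonneg c3 (sq_nonneg ((x 1).im + (x 2).im)),
        mul_nonneg (by linarith : (0:ℝ) ≤ p0 + p3)
          (by nlinarith [sq_nonneg (x 0).re, sq_nonneg (x 0).im, sq_nonneg (x 3).re,
            sq_nonneg (x 3).im] : (0:ℝ) ≤ (x 0).re * (x 0).re + (x 0).im * (x 0).im
            + ((x 3).re * (x 3).re + (x 3).im * (x 3).im))]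

end
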